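/- For every structure R there exists a structure in canonical form that is equivalent to R with respect to the congruence ≈; moreover this canonical structure is either the unit 1 or different from 1. (A structure is in canonical form when either it is 1, or all of the following hold: the only negated substructures occurring in it are negative propositional variables; no unit occurs in it while at least one name does; the nesting of occurrences of Par, CoPar, Seq and the self-dual quantifier forms a right-recursive syntax tree; and no occurrence of the self-dual quantifier can be removed while preserving ≈.) -/
import Mathlib


/- Formalization of the deep-inference system BVQ (BV with a self-dual
   quantifier), its symmetric version SBVQ, the process calculus CCSR and
   its labelled transition system, following the paper's definitions. -/

namespace BVQ

/-- Structures of BVQ.  A negative propositional variable `¬a` is represented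
    as `Str.not (Str.pos a)`. -/
inductive Str : Type where
  | one : Str                 -- the unit 1
  | pos : ℕ → Str             -- positive propositional variable
  | not : Str → Str           -- negation
  | ten : Str → Str → Str     -- CoPar (R ⊗ T)
  | seq : Str → Str → Str     -- Seq ⟨R ; T⟩
  | par : Str → Str → Str     -- Par [R ⅋ T]
  | all : ℕ → Str → Str       -- self-dual quantifier ∀a.R
deriving DecidableEq

namespace Str

/-- rename free occurrences of the variable `a` to `b`. -/
def rename (a b : ℕ) : Str → Str
  | one => one
  | pos c => pos (if c = a then b else c)
  | not R => not (rename a b R)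
  | ten R T => ten (rename a b R) (rename a b T)
  | seq R T => seq (rename a b R) (rename a b T)
  | par R T => par (rename a b R) (rename a b T)
  | all c R => if c = a then all c R else all c (rename a b R)

/-- free variable names. -/
def fv : Str → Finset ℕ
  | one => ∅
  | pos a => {a}
  | not R => fv R
  | ten R T => fv R ∪ fv T
  | seq R T => fv R ∪ fv T
  | par R T => fv R ∪ fv T
  | all a R => (fv R).erase a

/-- a structure is Tensor-free when no CoPar occurs in it. -/
def TensorFree : Str → Prop
  | one => True
  | pos _ => True
  | not R => TensorFree R
  | ten _ _ => False
  | seq R T => TensorFree R ∧ TensorFree T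
  | par R T => TensorFree R ∧ TensorFree T
  | all _ R => TensorFree R

/-- the list of atom occurrences (variable name together with its polarity). -/
def atoms : Str → List (ℕ × Bool)
  | one => []
  | pos a => [(a, true)]
  | not R => (atoms R).map (fun p => (p.1, !p.2))
  | ten R T => atoms R ++ atoms T
  | seq R T => atoms R ++ atoms T
  | par R T => atoms R ++ atoms T
  | all _ R => atoms R

/-- number of free occurrences of the positive variable `h`. -/
def countP (h : ℕ) : Str → ℕ
  | one => 0
  | pos a => if a = h then 1 else 0
  | not R => countP h R
  | ten R T => countP h R + countP h T
  | seq R T => countP h R + countP h T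
  | par R T => countP h R + countP h T
  | all a R => if a = h then 0 else countP h R

/-- erase all occurrences of the name `a` (in both polarities), replacing
    them by the unit. -/
def erase (a : ℕ) : Str → Str
  | one => one
  | pos c => if c = a then one else pos c
  | not R => if R = pos a then one else not (erase a R)
  | ten R T => ten (erase a R) (erase a T)
  | seq R T => seq (erase a R) (erase a T)
  | par R T => par (erase a R) (erase a T)
  | all c R => all c (erase a R)

end Str

/-- names: positive or negative propositional variables. -/
def IsLit (R : Str) : Prop := ∃ a : ℕ, R = Str.pos a ∨ R = Str.not (Str.pos a)

/-- The congruence ≈ on structures. -/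
inductive Cong : Str → Str → Prop where
  | refl (R) : Cong R R
  | symm {R T} : Cong R T → Cong T R
  | trans {R T U} : Cong R T → Cong T U → Cong R U
  -- contextual closure
  | not_congr {R T} : Cong R T → Cong (.not R) (.not T)
  | ten_congr {R R' T T'} : Cong R R' → Cong T T' → Cong (.ten R T) (.ten R' T')
  | seq_congr {R R' T T'} : Cong R R' → Cong T T' → Cong (.seq R T) (.seq R' T')
  | par_congr {R R' T T'} : Cong R R' → Cong T T' → Cong (.par R T) (.par R' T')
  | all_congr (a) {R T} : Cong R T → Cong (.all a R) (.all a T)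
  -- unit laws
  | ten_one (R) : Cong (.ten R .one) R
  | seq_one_right (R) : Cong (.seq R .one) R
  | seq_one_left (R) : Cong (.seq .one R) R
  | par_one (R) : Cong (.par R .one) R
  -- associativity
  | ten_assoc (R T U) : Cong (.ten (.ten R T) U) (.ten R (.ten T U))
  | seq_assoc (R T U) : Cong (.seq (.seq R T) U) (.seq R (.seq T U))
  | par_assoc (R T U) : Cong (.par (.par R T) U) (.par R (.par T U))
  -- commutativity
  | ten_comm (R T) : Cong (.ten R T) (.ten T R)
  | par_comm (R T) : Cong (.par R T) (.par T R)
  -- negation laws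
  | not_one : Cong (.not .one) .one
  | not_not (a) : Cong (.not (.not (.pos a))) (.pos a)
  | not_ten (R T) : Cong (.not (.ten R T)) (.par (.not R) (.not T))
  | not_seq (R T) : Cong (.not (.seq R T)) (.seq (.not R) (.not T))
  | not_par (R T) : Cong (.not (.par R T)) (.ten (.not R) (.not T))
  | not_all (a R) : Cong (.not (.all a R)) (.all a (.not R))
  -- vacuous quantifier elimination
  | all_vac (a R) : a ∉ R.fv → Cong (.all a R) R
  -- α-renaming of bound variables
  | alpha (a b R) : b ∉ R.fv → Cong (.all a R) (.all b (R.rename a b))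
  -- exchange of adjacent quantifiers
  | all_exch (a b R) : Cong (.all a (.all b R)) (.all b (.all a R))

/-- one-hole structure contexts S{·}. -/
inductive Ctx : Type where
  | hole : Ctx
  | notC : Ctx → Ctx
  | tenL : Ctx → Str → Ctx
  | tenR : Str → Ctx → Ctx
  | seqL : Ctx → Str → Ctx
  | seqR : Str → Ctx → Ctx
  | parL : Ctx → Str → Ctx
  | parR : Str → Ctx → Ctx
  | allC : ℕ → Ctx → Ctx

/-- filling the hole of a context. -/
def Ctx.fill : Ctx → Str → Str
  | .hole, R => R
  | .notC C, R => .not (C.fill R)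
  | .tenL C T, R => .ten (C.fill R) T
  | .tenR T C, R => .ten T (C.fill R)
  | .seqL C T, R => .seq (C.fill R) T
  | .seqR T C, R => .seq T (C.fill R)
  | .parL C T, R => .par (C.fill R) T
  | .parR T C, R => .par T (C.fill R)
  | .allC a C, R => .all a (C.fill R)

/-- right-contexts S⌞{·} ::= {·} | [S⌞{·} ⅋ R] | ⟨S⌞{·} ; R⟩ | ∀a.S⌞{·}. -/
inductive Ctx.IsRight : Ctx → Prop where
  | hole : Ctx.IsRight .hole
  | parL {C} (T) : Ctx.IsRight C → Ctx.IsRight (.parL C T)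
  | seqL {C} (T) : Ctx.IsRight C → Ctx.IsRight (.seqL C T)
  | allC (a) {C} : Ctx.IsRight C → Ctx.IsRight (.allC a C)

/-- the hole of the context lies in the scope of a quantifier binding `b`. -/
def Ctx.captures (b : ℕ) : Ctx → Bool
  | .hole => false
  | .notC C => C.captures b
  | .tenL C _ => C.captures b
  | .tenR _ C => C.captures b
  | .seqL C _ => C.captures b
  | .seqR _ C => C.captures b
  | .parL C _ => C.captures b
  | .parR _ C => C.captures b
  | .allC a C => (a == b) || C.captures b

/-- rule names of SBVQ. -/
inductive Rule : Type where
  | aiDown | s | qDown | uDown | aiUp | qUp | uUp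
deriving DecidableEq

/-- redex/contractum pairs of the rules (premise, conclusion). -/
inductive Shallow : Rule → Str → Str → Prop where
  | aiDown (a : ℕ) :
      Shallow .aiDown .one (.par (.pos a) (.not (.pos a)))
  | s (R T U : Str) :
      Shallow .s (.ten (.par R U) T) (.par (.ten R T) U)
  | qDown (R T U V : Str) :
      Shallow .qDown (.seq (.par R U) (.par T V)) (.par (.seq R T) (.seq U V))
  | uDown (a : ℕ) (R T : Str) :
      Shallow .uDown (.all a (.par R T)) (.par (.all a R) (.all a T))
  | aiUp (a : ℕ) :
      Shallow .aiUp (.ten (.pos a) (.not (.pos a))) .one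
  | qUp (R T U V : Str) :
      Shallow .qUp (.ten (.seq R U) (.seq T V)) (.seq (.ten R T) (.ten U V))
  | uUp (a : ℕ) (R T : Str) :
      Shallow .uUp (.ten (.all a R) (.all a T)) (.all a (.ten R T))

/-- one instance of rule ρ with premise T and conclusion R, applied inside a
    context, modulo ≈. -/
def Step (ρ : Rule) (T R : Str) : Prop :=
  ∃ (C : Ctx) (p c : Str), Shallow ρ p c ∧ Cong T (C.fill p) ∧ Cong R (C.fill c)

/-- an instance of the rule at↓⌞: an ai↓ instance whose conclusion has the
    form S⌞[a ⅋ ¬a] for a right-context S⌞{·}. -/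
def StepAtR (T R : Str) : Prop :=
  ∃ (C : Ctx) (a : ℕ), C.IsRight ∧ Cong T (C.fill .one) ∧
    Cong R (C.fill (.par (.pos a) (.not (.pos a))))

def BVQrules : Set Rule := {Rule.aiDown, Rule.s, Rule.qDown, Rule.uDown}
def SBVQrules : Set Rule :=
  {Rule.aiDown, Rule.s, Rule.qDown, Rule.uDown, Rule.aiUp, Rule.qUp, Rule.uUp}

/-- Derivations: a finite sequence of rule instances composed modulo ≈, from
    the premise (top) to the conclusion (bottom). -/
inductive DerivD : Str → Str → Type where
  | base {T R : Str} : Cong T R → DerivD T R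
  | cons {T U R : Str} (ρ : Rule) (C : Ctx) (p c : Str) :
      Shallow ρ p c → Cong T (C.fill p) → Cong U (C.fill c) →
      DerivD U R → DerivD T R

namespace DerivD

/-- all rules used belong to B. -/
def UsesOnly (B : Set Rule) : {T R : Str} → DerivD T R → Prop
  | _, _, .base _ => True
  | _, _, .cons ρ _ _ _ _ _ _ D => ρ ∈ B ∧ UsesOnly B D

/-- every structure occurring in the derivation is Tensor-free. -/
def AllTF : {T R : Str} → DerivD T R → Prop
  | T, R, .base _ => T.TensorFree ∧ R.TensorFree
  | T, _, .cons _ _ _ _ _ _ _ D => T.TensorFree ∧ AllTF D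

/-- no instance of ai↓ occurs. -/
def NoAI : {T R : Str} → DerivD T R → Prop
  | _, _, .base _ => True
  | _, _, .cons ρ _ _ _ _ _ _ D => ρ ≠ Rule.aiDown ∧ NoAI D

/-- every instance of ai↓ occurring in the derivation is an at↓⌞ instance. -/
def Standard : {T R : Str} → DerivD T R → Prop
  | _, _, .base _ => True
  | _, _, @DerivD.cons T U _ ρ _ _ _ _ _ _ D =>
      (ρ = Rule.aiDown → StepAtR T U) ∧ Standard D

/-- every rule instance (with its premise and conclusion) satisfies P. -/
def InstancesOK (P : Rule → Str → Str → Prop) : {T R : Str} → DerivD T R → Prop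
  | _, _, .base _ => True
  | _, _, @DerivD.cons T U _ ρ _ _ _ _ _ _ D => P ρ T U ∧ InstancesOK P D

/-- a derivation is trivial when all its structures are Tensor-free and it
    contains no instance of ai↓. -/
def Trivial {T R : Str} (D : DerivD T R) : Prop := AllTF D ∧ NoAI D

/-- precompose a derivation with a congruence. -/
def precong {T U R : Str} (h : Cong T U) : DerivD U R → DerivD T R
  | .base h' => .base (Cong.trans h h')
  | .cons ρ C p c sh h1 h2 D => .cons ρ C p c sh (Cong.trans h h1) h2 D

/-- membership in the standard fragment BVQ⌞ = {at↓⌞, q↓, u↓}, whose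
    derivations contain Tensor-free structures only. -/
def InBVQL {T R : Str} (D : DerivD T R) : Prop :=
  UsesOnly {Rule.aiDown, Rule.qDown, Rule.uDown} D ∧ Standard D ∧ AllTF D

end DerivD

/-- `Erases a D E` : E is obtained from D by replacing the unit for the
    occurrences of the atoms a and ¬a in every structure of D, eliminating
    the rule instances that become fake. -/
inductive Erases (a : ℕ) :
    {T R T' R' : Str} → DerivD T R → DerivD T' R' → Prop where
  | base {T R : Str} (h : Cong T R) (h' : Cong (T.erase a) (R.erase a)) :
      Erases a (.base h) (.base h')
  | keep {T U R R' : Str} {ρ : Rule} {C : Ctx} {p c : Str}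
      (sh : Shallow ρ p c) (h1 : Cong T (C.fill p)) (h2 : Cong U (C.fill c))
      {D : DerivD U R} {E : DerivD (U.erase a) R'}
      (C' : Ctx) (p' c' : Str) (sh' : Shallow ρ p' c')
      (h1' : Cong (T.erase a) (C'.fill p')) (h2' : Cong (U.erase a) (C'.fill c')) :
      Erases a D E →
      Erases a (.cons ρ C p c sh h1 h2 D) (.cons ρ C' p' c' sh' h1' h2' E)
  | drop {T U R R' : Str} {ρ : Rule} {C : Ctx} {p c : Str}
      (sh : Shallow ρ p c) (h1 : Cong T (C.fill p)) (h2 : Cong U (C.fill c))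
      {D : DerivD U R} {E : DerivD (U.erase a) R'}
      (hc : Cong (T.erase a) (U.erase a)) :
      Erases a D E →
      Erases a (.cons ρ C p c sh h1 h2 D) (E.precong hc)

/-- `IsReduction a D E` : E is the reduction of D, obtained by locating the
    lowermost instance of at↓⌞ in D (annihilating the pair a, ¬a), replacing
    the unit for the occurrences of a and ¬a in the part of D below it, and
    eliminating the fake rule instances so created. -/
inductive IsReduction (a : ℕ) :
    {T R R' : Str} → DerivD T R → DerivD T R' → Prop where
  | step {T U R R' : Str} (ρ : Rule) (C : Ctx) (p c : Str)
      (sh : Shallow ρ p c) (h1 : Cong T (C.fill p)) (h2 : Cong U (C.fill c))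
      {D : DerivD U R} {E : DerivD U R'} :
      IsReduction a D E →
      IsReduction a (.cons ρ C p c sh h1 h2 D) (.cons ρ C p c sh h1 h2 E)
  | red {T U R R' : Str} (C : Ctx)
      (sh : Shallow .aiDown .one (.par (.pos a) (.not (.pos a))))
      (h1 : Cong T (C.fill .one))
      (h2 : Cong U (C.fill (.par (.pos a) (.not (.pos a)))))
      (hat : StepAtR T U)
      {D : DerivD U R} {E : DerivD (U.erase a) R'}
      (hno : D.NoAI) (hE : Erases a D E) (hc : Cong T (U.erase a)) :
      IsReduction a
        (.cons .aiDown C .one (.par (.pos a) (.not (.pos a))) sh h1 h2 D)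
        (E.precong hc)

/-- actions of CCSR: names a and co-names ā. -/
inductive Act : Type where
  | name : ℕ → Act
  | coname : ℕ → Act
deriving DecidableEq

def Act.var : Act → ℕ
  | .name a => a
  | .coname a => a

def Act.dual : Act → Act
  | .name a => .coname a
  | .coname a => .name a

/-- the literal (name) of BVQ corresponding to an action. -/
def Act.lit : Act → Str
  | .name a => .pos a
  | .coname a => .not (.pos a)

/-- processes of CCSR. -/
inductive Proc : Type where
  | nil : Proc
  | act : Act → Proc → Proc
  | par : Proc → Proc → Proc
  | nu : ℕ → Proc → Proc

/-- free names of a process. -/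
def Proc.fn : Proc → Finset ℕ
  | .nil => ∅
  | .act l E => insert l.var (fn E)
  | .par E F => fn E ∪ fn F
  | .nu a E => (fn E).erase a

/-- bound names of a process. -/
def Proc.bn : Proc → Finset ℕ
  | .nil => ∅
  | .act _ E => bn E
  | .par E F => bn E ∪ bn F
  | .nu a E => insert a (bn E)

/-- the translation ⟦·⟧ of processes into structures. -/
def Proc.toStr : Proc → Str
  | .nil => .one
  | .act l E => .seq l.lit (toStr E)
  | .par E F => .par (toStr E) (toStr F)
  | .nu a E => .all a (toStr E)

/-- structural congruence of processes. -/
inductive PCong : Proc → Proc → Prop where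
  | refl (E) : PCong E E
  | symm {E F} : PCong E F → PCong F E
  | trans {E F G} : PCong E F → PCong F G → PCong E G
  | act_congr (l) {E F} : PCong E F → PCong (.act l E) (.act l F)
  | par_congr {E E' F F'} : PCong E E' → PCong F F' → PCong (.par E F) (.par E' F')
  | nu_congr (a) {E F} : PCong E F → PCong (.nu a E) (.nu a F)
  | par_comm (E F) : PCong (.par E F) (.par F E)
  | par_assoc (E F G) : PCong (.par (.par E F) G) (.par E (.par F G))
  | par_nil (E) : PCong (.par E .nil) E
  | nu_exch (a b E) : PCong (.nu a (.nu b E)) (.nu b (.nu a E))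
  | nu_vac (a E) : a ∉ E.fn → PCong (.nu a E) E
  | scope (a E F) : a ∉ F.fn → PCong (.nu a (.par E F)) (.par (.nu a E) F)

/-- The labelled transition system of CCSR.  A label sequence is a finite
    list of (non-silent) actions: the silent label τ is represented by the
    empty list (sequences are taken modulo absorption of τ). -/
inductive LTS : Proc → List Act → Proc → Prop where
  | refl (E) : LTS E [] E
  | act (l E) : LTS (.act l E) [l] E
  | com {E E' F F'} (l) : LTS E [l] E' → LTS F [l.dual] F' →
      LTS (.par E F) [] (.par E' F')
  | parCtx {E E' σ} (F) : LTS E σ E' → LTS (.par E F) σ (.par E' F)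
  | resTau {E E'} (l a) : LTS E [l] E' → l.var = a →
      LTS (.nu a E) [] (.nu a E')
  | resLbl {E E'} (l a) : LTS E [l] E' → l.var ≠ a →
      LTS (.nu a E) [l] (.nu a E')
  | trans {E F G σ σ'} : LTS E σ F → LTS F σ' G → LTS E (σ ++ σ') G
  | congr {E E' F F' σ} : PCong E E' → LTS E' σ F' → PCong F' F → LTS E σ F

/-- process structures: images of the translation ⟦·⟧. -/
inductive ProcStr : Str → Prop where
  | one : ProcStr .one
  | seq {l R} : IsLit l → ProcStr R → ProcStr (.seq l R)
  | par {R T} : ProcStr R → ProcStr T → ProcStr (.par R T)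
  | all (a) {R} : ProcStr R → ProcStr (.all a R)

/-- the grammar R ::= 1 | ℓ | [R ⅋ R] | ∀a.R. -/
inductive PreSimple : Str → Prop where
  | one : PreSimple .one
  | pos (a) : PreSimple (.pos a)
  | neg (a) : PreSimple (.not (.pos a))
  | par {R T} : PreSimple R → PreSimple T → PreSimple (.par R T)
  | all (a) {R} : PreSimple R → PreSimple (.all a R)

/-- simple structures: generated by 1 | ℓ | [R ⅋ R] | ∀a.R with pairwise
    distinct occurring variable names. -/
def SimpleStr (R : Str) : Prop := PreSimple R ∧ R.atoms.Nodup

/-- canonical environment structures different from the unit. -/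
inductive EnvC : Str → Prop where
  | lit {l} : IsLit l → EnvC l
  | seq {l R} : IsLit l → EnvC R → EnvC (.seq l R)
  | all (a) {R} : a ∈ R.fv → EnvC R → EnvC (.all a R)

/-- environment structures. -/
def EnvStr (R : Str) : Prop := R = Str.one ∨ EnvC R

/-- the map ⟦R⟧X from environment structures to sequences of action labels
    (τ is represented by the empty sequence). -/
def envSeq : Finset ℕ → Str → List Act
  | _, .one => []
  | X, .pos a => if a ∈ X then [] else [Act.name a]
  | X, .not (.pos a) => if a ∈ X then [] else [Act.coname a]
  | X, .seq (.pos a) R => (if a ∈ X then [] else [Act.name a]) ++ envSeq X R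
  | X, .seq (.not (.pos a)) R => (if a ∈ X then [] else [Act.coname a]) ++ envSeq X R
  | X, .all a R => envSeq (insert a X) R
  | _, _ => []

/-- a derivation with conclusion [T ⅋ R] consumes the environment structure R
    when every atom of R is annihilated along the derivation by an instance of
    at↓⌞, so that no atom of R occurs in the premise of the derivation. -/
def Consumes (R T : Str) : Prop := ∀ p ∈ R.atoms, p ∉ T.atoms

end BVQ

namespace BVQ

/-- the only negated substructures are negative propositional variables. -/
def NegAtomic : Str → Prop
  | .one => True
  | .pos _ => True
  | .not R => ∃ a : ℕ, R = Str.pos a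
  | .ten R T => NegAtomic R ∧ NegAtomic T
  | .seq R T => NegAtomic R ∧ NegAtomic T
  | .par R T => NegAtomic R ∧ NegAtomic T
  | .all _ R => NegAtomic R

/-- no unit occurs in the structure. -/
def NoUnit : Str → Prop
  | .one => False
  | .pos _ => True
  | .not R => NoUnit R
  | .ten R T => NoUnit R ∧ NoUnit T
  | .seq R T => NoUnit R ∧ NoUnit T
  | .par R T => NoUnit R ∧ NoUnit T
  | .all _ R => NoUnit R

/-- at least one name occurs in the structure. -/
def HasName (R : Str) : Prop := R.atoms ≠ []

/-- the nesting of Par, CoPar and Seq forms a right-recursive syntax tree. -/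
def RightRec : Str → Prop
  | .one => True
  | .pos _ => True
  | .not R => RightRec R
  | .ten R T => (∀ A B, R ≠ Str.ten A B) ∧ RightRec R ∧ RightRec T
  | .seq R T => (∀ A B, R ≠ Str.seq A B) ∧ RightRec R ∧ RightRec T
  | .par R T => (∀ A B, R ≠ Str.par A B) ∧ RightRec R ∧ RightRec T
  | .all _ R => RightRec R

/-- every occurrence of the self-dual quantifier effectively binds an
    occurring name, so none of them can be eliminated preserving ≈. -/
def EffBinders : Str → Prop
  | .one => True
  | .pos _ => True
  | .not R => EffBinders R
  | .ten R T => EffBinders R ∧ EffBinders T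
  | .seq R T => EffBinders R ∧ EffBinders T
  | .par R T => EffBinders R ∧ EffBinders T
  | .all a R => a ∈ R.fv ∧ EffBinders R

/-- canonical structures. -/
def Canonical (R : Str) : Prop :=
  R = Str.one ∨
    (NegAtomic R ∧ NoUnit R ∧ HasName R ∧ RightRec R ∧ EffBinders R)

/-! ### Auxiliary normalization machinery -/

/-- double negation elimination is derivable in the congruence. -/
theorem cong_not_not : ∀ R : Str, Cong (.not (.not R)) R
  | .one => (Cong.not_congr Cong.not_one).trans Cong.not_one
  | .pos a => Cong.not_not a
  | .not R => Cong.not_congr (cong_not_not R)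
  | .ten R T =>
      ((Cong.not_congr (Cong.not_ten R T)).trans (Cong.not_par _ _)).trans
        (Cong.ten_congr (cong_not_not R) (cong_not_not T))
  | .seq R T =>
      ((Cong.not_congr (Cong.not_seq R T)).trans (Cong.not_seq _ _)).trans
        (Cong.seq_congr (cong_not_not R) (cong_not_not T))
  | .par R T =>
      ((Cong.not_congr (Cong.not_par R T)).trans (Cong.not_ten _ _)).trans
        (Cong.par_congr (cong_not_not R) (cong_not_not T))
  | .all a R =>
      ((Cong.not_congr (Cong.not_all a R)).trans (Cong.not_all a _)).trans
        (Cong.all_congr a (cong_not_not R))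

mutual
/-- negation normal form. -/
def nnf : Str → Str
  | .one => .one
  | .pos a => .pos a
  | .not R => negf R
  | .ten R T => .ten (nnf R) (nnf T)
  | .seq R T => .seq (nnf R) (nnf T)
  | .par R T => .par (nnf R) (nnf T)
  | .all a R => .all a (nnf R)
/-- negation normal form of the negation. -/
def negf : Str → Str
  | .one => .one
  | .pos a => .not (.pos a)
  | .not R => nnf R
  | .ten R T => .par (negf R) (negf T)
  | .seq R T => .seq (negf R) (negf T)
  | .par R T => .ten (negf R) (negf T)
  | .all a R => .all a (negf R)
end

theorem cong_nnf_negf : ∀ R : Str, Cong R (nnf R) ∧ Cong (.not R) (negf R)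
  | .one => ⟨Cong.refl _, Cong.not_one⟩
  | .pos a => ⟨Cong.refl _, Cong.refl _⟩
  | .not R =>
      ⟨(cong_nnf_negf R).2,
       (cong_not_not R).trans (cong_nnf_negf R).1⟩
  | .ten R T =>
      ⟨Cong.ten_congr (cong_nnf_negf R).1 (cong_nnf_negf T).1,
       (Cong.not_ten R T).trans
         (Cong.par_congr (cong_nnf_negf R).2 (cong_nnf_negf T).2)⟩
  | .seq R T =>
      ⟨Cong.seq_congr (cong_nnf_negf R).1 (cong_nnf_negf T).1,
       (Cong.not_seq R T).trans
         (Cong.seq_congr (cong_nnf_negf R).2 (cong_nnf_negf T).2)⟩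
  | .par R T =>
      ⟨Cong.par_congr (cong_nnf_negf R).1 (cong_nnf_negf T).1,
       (Cong.not_par R T).trans
         (Cong.ten_congr (cong_nnf_negf R).2 (cong_nnf_negf T).2)⟩
  | .all a R =>
      ⟨Cong.all_congr a (cong_nnf_negf R).1,
       (Cong.not_all a R).trans (Cong.all_congr a (cong_nnf_negf R).2)⟩

theorem negAtomic_nnf_negf : ∀ R : Str, NegAtomic (nnf R) ∧ NegAtomic (negf R)
  | .one => ⟨trivial, trivial⟩
  | .pos a => ⟨trivial, ⟨a, rfl⟩⟩
  | .not R => ⟨(negAtomic_nnf_negf R).2, (negAtomic_nnf_negf R).1⟩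
  | .ten R T =>
      ⟨⟨(negAtomic_nnf_negf R).1, (negAtomic_nnf_negf T).1⟩,
       ⟨(negAtomic_nnf_negf R).2, (negAtomic_nnf_negf T).2⟩⟩
  | .seq R T =>
      ⟨⟨(negAtomic_nnf_negf R).1, (negAtomic_nnf_negf T).1⟩,
       ⟨(negAtomic_nnf_negf R).2, (negAtomic_nnf_negf T).2⟩⟩
  | .par R T =>
      ⟨⟨(negAtomic_nnf_negf R).1, (negAtomic_nnf_negf T).1⟩,
       ⟨(negAtomic_nnf_negf R).2, (negAtomic_nnf_negf T).2⟩⟩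
  | .all a R => ⟨(negAtomic_nnf_negf R).1, (negAtomic_nnf_negf R).2⟩

/-- smart binary constructor eliminating units. -/
def binS (k : Str → Str → Str) (R T : Str) : Str :=
  if R = .one then T else if T = .one then R else k R T

/-- smart quantifier eliminating vacuous binders. -/
def allS (a : ℕ) (R : Str) : Str := if a ∈ R.fv then .all a R else R

/-- unit elimination. -/
def uel : Str → Str
  | .one => .one
  | .pos a => .pos a
  | .not R => .not (uel R)
  | .ten R T => binS .ten (uel R) (uel T)
  | .seq R T => binS .seq (uel R) (uel T)
  | .par R T => binS .par (uel R) (uel T)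
  | .all a R => allS a (uel R)

theorem cong_tenS (R T : Str) : Cong (.ten R T) (binS .ten R T) := by
  unfold binS
  split_ifs with h1 h2
  · subst h1; exact (Cong.ten_comm _ _).trans (Cong.ten_one T)
  · subst h2; exact Cong.ten_one R
  · exact Cong.refl _

theorem cong_seqS (R T : Str) : Cong (.seq R T) (binS .seq R T) := by
  unfold binS
  split_ifs with h1 h2
  · subst h1; exact Cong.seq_one_left T
  · subst h2; exact Cong.seq_one_right R
  · exact Cong.refl _

theorem cong_parS (R T : Str) : Cong (.par R T) (binS .par R T) := by
  unfold binS
  split_ifs with h1 h2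
  · subst h1; exact (Cong.par_comm _ _).trans (Cong.par_one T)
  · subst h2; exact Cong.par_one R
  · exact Cong.refl _

theorem cong_allS (a : ℕ) (R : Str) : Cong (.all a R) (allS a R) := by
  unfold allS
  split_ifs with h
  · exact Cong.refl _
  · exact Cong.all_vac a R h

theorem cong_uel : ∀ R : Str, Cong R (uel R)
  | .one => Cong.refl _
  | .pos a => Cong.refl _
  | .not R => Cong.not_congr (cong_uel R)
  | .ten R T =>
      (Cong.ten_congr (cong_uel R) (cong_uel T)).trans (cong_tenS _ _)
  | .seq R T =>
      (Cong.seq_congr (cong_uel R) (cong_uel T)).trans (cong_seqS _ _)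
  | .par R T =>
      (Cong.par_congr (cong_uel R) (cong_uel T)).trans (cong_parS _ _)
  | .all a R => (Cong.all_congr a (cong_uel R)).trans (cong_allS a _)

theorem negAtomic_binS {P : Str → Prop} (k : Str → Str → Str)
    (hone : P Str.one) (hk : ∀ R T, P R → P T → P (k R T)) :
    ∀ R T : Str, P R → P T → P (binS k R T) := by
  intro R T hR hT
  unfold binS
  split_ifs with h1 h2
  · exact hT
  · exact hR
  · exact hk R T hR hT

theorem negAtomic_uel : ∀ R : Str, NegAtomic R → NegAtomic (uel R)
  | .one, _ => trivial
  | .pos a, _ => trivial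
  | .not R, h => by
      obtain ⟨a, rfl⟩ := h
      exact ⟨a, rfl⟩
  | .ten R T, h =>
      negAtomic_binS .ten trivial (fun _ _ hR hT => ⟨hR, hT⟩) _ _
        (negAtomic_uel R h.1) (negAtomic_uel T h.2)
  | .seq R T, h =>
      negAtomic_binS .seq trivial (fun _ _ hR hT => ⟨hR, hT⟩) _ _
        (negAtomic_uel R h.1) (negAtomic_uel T h.2)
  | .par R T, h =>
      negAtomic_binS .par trivial (fun _ _ hR hT => ⟨hR, hT⟩) _ _
        (negAtomic_uel R h.1) (negAtomic_uel T h.2)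
  | .all a R, h => by
      show NegAtomic (allS a (uel R))
      unfold allS
      split_ifs
      · exact negAtomic_uel R h
      · exact negAtomic_uel R h

theorem effBinders_uel : ∀ R : Str, EffBinders (uel R)
  | .one => trivial
  | .pos _ => trivial
  | .not R => effBinders_uel R
  | .ten R T =>
      negAtomic_binS .ten trivial (fun _ _ hR hT => ⟨hR, hT⟩) _ _
        (effBinders_uel R) (effBinders_uel T)
  | .seq R T =>
      negAtomic_binS .seq trivial (fun _ _ hR hT => ⟨hR, hT⟩) _ _
        (effBinders_uel R) (effBinders_uel T)
  | .par R T =>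
      negAtomic_binS .par trivial (fun _ _ hR hT => ⟨hR, hT⟩) _ _
        (effBinders_uel R) (effBinders_uel T)
  | .all a R => by
      show EffBinders (allS a (uel R))
      unfold allS
      split_ifs with h
      · exact ⟨h, effBinders_uel R⟩
      · exact effBinders_uel R

theorem noUnit_binS (k : Str → Str → Str)
    (hk : ∀ R T, NoUnit R → NoUnit T → NoUnit (k R T))
    (R T : Str) (hR : R = .one ∨ NoUnit R) (hT : T = .one ∨ NoUnit T) :
    binS k R T = .one ∨ NoUnit (binS k R T) := by
  unfold binS
  split_ifs with h1 h2
  · exact hT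
  · exact hR
  · exact Or.inr (hk R T (hR.resolve_left h1) (hT.resolve_left h2))

theorem noUnit_uel : ∀ R : Str, NegAtomic R → uel R = .one ∨ NoUnit (uel R)
  | .one, _ => Or.inl rfl
  | .pos a, _ => Or.inr trivial
  | .not R, h => by
      obtain ⟨a, rfl⟩ := h
      exact Or.inr trivial
  | .ten R T, h =>
      noUnit_binS .ten (fun _ _ hR hT => ⟨hR, hT⟩) _ _
        (noUnit_uel R h.1) (noUnit_uel T h.2)
  | .seq R T, h =>
      noUnit_binS .seq (fun _ _ hR hT => ⟨hR, hT⟩) _ _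
        (noUnit_uel R h.1) (noUnit_uel T h.2)
  | .par R T, h =>
      noUnit_binS .par (fun _ _ hR hT => ⟨hR, hT⟩) _ _
        (noUnit_uel R h.1) (noUnit_uel T h.2)
  | .all a R, h => by
      show allS a (uel R) = Str.one ∨ NoUnit (allS a (uel R))
      unfold allS
      split_ifs with hm
      · refine Or.inr ?_
        rcases noUnit_uel R h with h1 | h1
        · rw [h1] at hm; simp [Str.fv] at hm
        · exact h1
      · exact noUnit_uel R h

/-- right rotation for CoPar. -/
def rten : Str → Str → Str
  | .ten A B, T => rten A (rten B T)
  | R, T => .ten R T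

/-- right rotation for Seq. -/
def rseq : Str → Str → Str
  | .seq A B, T => rseq A (rseq B T)
  | R, T => .seq R T

/-- right rotation for Par. -/
def rpar : Str → Str → Str
  | .par A B, T => rpar A (rpar B T)
  | R, T => .par R T

/-- right-recursive normal form. -/
def rr : Str → Str
  | .one => .one
  | .pos a => .pos a
  | .not R => .not (rr R)
  | .ten R T => rten (rr R) (rr T)
  | .seq R T => rseq (rr R) (rr T)
  | .par R T => rpar (rr R) (rr T)
  | .all a R => .all a (rr R)

theorem rten_eq (R T : Str) (h : ∀ A B, R ≠ Str.ten A B) :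
    rten R T = .ten R T := by
  cases R <;> first | rfl | exact absurd rfl (h _ _)

theorem rseq_eq (R T : Str) (h : ∀ A B, R ≠ Str.seq A B) :
    rseq R T = .seq R T := by
  cases R <;> first | rfl | exact absurd rfl (h _ _)

theorem rpar_eq (R T : Str) (h : ∀ A B, R ≠ Str.par A B) :
    rpar R T = .par R T := by
  cases R <;> first | rfl | exact absurd rfl (h _ _)

theorem cong_rten : ∀ R T : Str, Cong (.ten R T) (rten R T)
  | .ten A B, T =>
      ((Cong.ten_assoc A B T).trans
        (Cong.ten_congr (Cong.refl A) (cong_rten B T))).trans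
        (cong_rten A (rten B T))
  | .one, T => Cong.refl _
  | .pos _, T => Cong.refl _
  | .not _, T => Cong.refl _
  | .seq _ _, T => Cong.refl _
  | .par _ _, T => Cong.refl _
  | .all _ _, T => Cong.refl _

theorem cong_rseq : ∀ R T : Str, Cong (.seq R T) (rseq R T)
  | .seq A B, T =>
      ((Cong.seq_assoc A B T).trans
        (Cong.seq_congr (Cong.refl A) (cong_rseq B T))).trans
        (cong_rseq A (rseq B T))
  | .one, T => Cong.refl _
  | .pos _, T => Cong.refl _
  | .not _, T => Cong.refl _
  | .ten _ _, T => Cong.refl _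
  | .par _ _, T => Cong.refl _
  | .all _ _, T => Cong.refl _

theorem cong_rpar : ∀ R T : Str, Cong (.par R T) (rpar R T)
  | .par A B, T =>
      ((Cong.par_assoc A B T).trans
        (Cong.par_congr (Cong.refl A) (cong_rpar B T))).trans
        (cong_rpar A (rpar B T))
  | .one, T => Cong.refl _
  | .pos _, T => Cong.refl _
  | .not _, T => Cong.refl _
  | .ten _ _, T => Cong.refl _
  | .seq _ _, T => Cong.refl _
  | .all _ _, T => Cong.refl _

theorem cong_rr : ∀ R : Str, Cong R (rr R)
  | .one => Cong.refl _
  | .pos _ => Cong.refl _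
  | .not R => Cong.not_congr (cong_rr R)
  | .ten R T =>
      (Cong.ten_congr (cong_rr R) (cong_rr T)).trans (cong_rten _ _)
  | .seq R T =>
      (Cong.seq_congr (cong_rr R) (cong_rr T)).trans (cong_rseq _ _)
  | .par R T =>
      (Cong.par_congr (cong_rr R) (cong_rr T)).trans (cong_rpar _ _)
  | .all a R => Cong.all_congr a (cong_rr R)

theorem rten_pred (P : Str → Prop)
    (h : ∀ A B : Str, P (.ten A B) ↔ P A ∧ P B) :
    ∀ R T : Str, P R → P T → P (rten R T)
  | .ten A B, T, hR, hT =>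
      rten_pred P h A (rten B T) ((h A B).mp hR).1
        (rten_pred P h B T ((h A B).mp hR).2 hT)
  | .one, T, hR, hT => (h _ _).mpr ⟨hR, hT⟩
  | .pos _, T, hR, hT => (h _ _).mpr ⟨hR, hT⟩
  | .not _, T, hR, hT => (h _ _).mpr ⟨hR, hT⟩
  | .seq _ _, T, hR, hT => (h _ _).mpr ⟨hR, hT⟩
  | .par _ _, T, hR, hT => (h _ _).mpr ⟨hR, hT⟩
  | .all _ _, T, hR, hT => (h _ _).mpr ⟨hR, hT⟩

theorem rseq_pred (P : Str → Prop)
    (h : ∀ A B : Str, P (.seq A B) ↔ P A ∧ P B) :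
    ∀ R T : Str, P R → P T → P (rseq R T)
  | .seq A B, T, hR, hT =>
      rseq_pred P h A (rseq B T) ((h A B).mp hR).1
        (rseq_pred P h B T ((h A B).mp hR).2 hT)
  | .one, T, hR, hT => (h _ _).mpr ⟨hR, hT⟩
  | .pos _, T, hR, hT => (h _ _).mpr ⟨hR, hT⟩
  | .not _, T, hR, hT => (h _ _).mpr ⟨hR, hT⟩
  | .ten _ _, T, hR, hT => (h _ _).mpr ⟨hR, hT⟩
  | .par _ _, T, hR, hT => (h _ _).mpr ⟨hR, hT⟩
  | .all _ _, T, hR, hT => (h _ _).mpr ⟨hR, hT⟩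

theorem rpar_pred (P : Str → Prop)
    (h : ∀ A B : Str, P (.par A B) ↔ P A ∧ P B) :
    ∀ R T : Str, P R → P T → P (rpar R T)
  | .par A B, T, hR, hT =>
      rpar_pred P h A (rpar B T) ((h A B).mp hR).1
        (rpar_pred P h B T ((h A B).mp hR).2 hT)
  | .one, T, hR, hT => (h _ _).mpr ⟨hR, hT⟩
  | .pos _, T, hR, hT => (h _ _).mpr ⟨hR, hT⟩
  | .not _, T, hR, hT => (h _ _).mpr ⟨hR, hT⟩
  | .ten _ _, T, hR, hT => (h _ _).mpr ⟨hR, hT⟩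
  | .seq _ _, T, hR, hT => (h _ _).mpr ⟨hR, hT⟩
  | .all _ _, T, hR, hT => (h _ _).mpr ⟨hR, hT⟩

theorem atoms_rten : ∀ R T : Str, (rten R T).atoms = R.atoms ++ T.atoms
  | .ten A B, T => by
      show (rten A (rten B T)).atoms = _
      rw [atoms_rten A, atoms_rten B]
      simp [Str.atoms]
  | .one, T => rfl
  | .pos _, T => rfl
  | .not _, T => rfl
  | .seq _ _, T => rfl
  | .par _ _, T => rfl
  | .all _ _, T => rfl

theorem atoms_rseq : ∀ R T : Str, (rseq R T).atoms = R.atoms ++ T.atoms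
  | .seq A B, T => by
      show (rseq A (rseq B T)).atoms = _
      rw [atoms_rseq A, atoms_rseq B]
      simp [Str.atoms]
  | .one, T => rfl
  | .pos _, T => rfl
  | .not _, T => rfl
  | .ten _ _, T => rfl
  | .par _ _, T => rfl
  | .all _ _, T => rfl

theorem atoms_rpar : ∀ R T : Str, (rpar R T).atoms = R.atoms ++ T.atoms
  | .par A B, T => by
      show (rpar A (rpar B T)).atoms = _
      rw [atoms_rpar A, atoms_rpar B]
      simp [Str.atoms]
  | .one, T => rfl
  | .pos _, T => rfl
  | .not _, T => rfl
  | .ten _ _, T => rfl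
  | .seq _ _, T => rfl
  | .all _ _, T => rfl

theorem fv_rten : ∀ R T : Str, (rten R T).fv = R.fv ∪ T.fv
  | .ten A B, T => by
      show (rten A (rten B T)).fv = _
      rw [fv_rten A, fv_rten B]
      simp [Str.fv, Finset.union_assoc]
  | .one, T => rfl
  | .pos _, T => rfl
  | .not _, T => rfl
  | .seq _ _, T => rfl
  | .par _ _, T => rfl
  | .all _ _, T => rfl

theorem fv_rseq : ∀ R T : Str, (rseq R T).fv = R.fv ∪ T.fv
  | .seq A B, T => by
      show (rseq A (rseq B T)).fv = _
      rw [fv_rseq A, fv_rseq B]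
      simp [Str.fv, Finset.union_assoc]
  | .one, T => rfl
  | .pos _, T => rfl
  | .not _, T => rfl
  | .ten _ _, T => rfl
  | .par _ _, T => rfl
  | .all _ _, T => rfl

theorem fv_rpar : ∀ R T : Str, (rpar R T).fv = R.fv ∪ T.fv
  | .par A B, T => by
      show (rpar A (rpar B T)).fv = _
      rw [fv_rpar A, fv_rpar B]
      simp [Str.fv, Finset.union_assoc]
  | .one, T => rfl
  | .pos _, T => rfl
  | .not _, T => rfl
  | .ten _ _, T => rfl
  | .seq _ _, T => rfl
  | .all _ _, T => rfl

theorem atoms_rr : ∀ R : Str, (rr R).atoms = R.atoms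
  | .one => rfl
  | .pos _ => rfl
  | .not R => by simp [rr, Str.atoms, atoms_rr R]
  | .ten R T => by
      show (rten (rr R) (rr T)).atoms = _
      rw [atoms_rten, atoms_rr R, atoms_rr T]; rfl
  | .seq R T => by
      show (rseq (rr R) (rr T)).atoms = _
      rw [atoms_rseq, atoms_rr R, atoms_rr T]; rfl
  | .par R T => by
      show (rpar (rr R) (rr T)).atoms = _
      rw [atoms_rpar, atoms_rr R, atoms_rr T]; rfl
  | .all a R => by simp [rr, Str.atoms, atoms_rr R]

theorem fv_rr : ∀ R : Str, (rr R).fv = R.fv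
  | .one => rfl
  | .pos _ => rfl
  | .not R => by simp [rr, Str.fv, fv_rr R]
  | .ten R T => by
      show (rten (rr R) (rr T)).fv = _
      rw [fv_rten, fv_rr R, fv_rr T]; rfl
  | .seq R T => by
      show (rseq (rr R) (rr T)).fv = _
      rw [fv_rseq, fv_rr R, fv_rr T]; rfl
  | .par R T => by
      show (rpar (rr R) (rr T)).fv = _
      rw [fv_rpar, fv_rr R, fv_rr T]; rfl
  | .all a R => by simp [rr, Str.fv, fv_rr R]

theorem negAtomic_rr : ∀ R : Str, NegAtomic R → NegAtomic (rr R)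
  | .one, h => trivial
  | .pos _, h => trivial
  | .not R, h => by
      obtain ⟨a, rfl⟩ := h
      exact ⟨a, rfl⟩
  | .ten R T, h =>
      rten_pred NegAtomic (fun _ _ => Iff.rfl) _ _
        (negAtomic_rr R h.1) (negAtomic_rr T h.2)
  | .seq R T, h =>
      rseq_pred NegAtomic (fun _ _ => Iff.rfl) _ _
        (negAtomic_rr R h.1) (negAtomic_rr T h.2)
  | .par R T, h =>
      rpar_pred NegAtomic (fun _ _ => Iff.rfl) _ _
        (negAtomic_rr R h.1) (negAtomic_rr T h.2)
  | .all a R, h => negAtomic_rr R h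

theorem noUnit_rr : ∀ R : Str, NoUnit R → NoUnit (rr R)
  | .one, h => h.elim
  | .pos _, h => trivial
  | .not R, h => noUnit_rr R h
  | .ten R T, h =>
      rten_pred NoUnit (fun _ _ => Iff.rfl) _ _
        (noUnit_rr R h.1) (noUnit_rr T h.2)
  | .seq R T, h =>
      rseq_pred NoUnit (fun _ _ => Iff.rfl) _ _
        (noUnit_rr R h.1) (noUnit_rr T h.2)
  | .par R T, h =>
      rpar_pred NoUnit (fun _ _ => Iff.rfl) _ _
        (noUnit_rr R h.1) (noUnit_rr T h.2)
  | .all a R, h => noUnit_rr R h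

theorem effBinders_rr : ∀ R : Str, EffBinders R → EffBinders (rr R)
  | .one, h => trivial
  | .pos _, h => trivial
  | .not R, h => effBinders_rr R h
  | .ten R T, h =>
      rten_pred EffBinders (fun _ _ => Iff.rfl) _ _
        (effBinders_rr R h.1) (effBinders_rr T h.2)
  | .seq R T, h =>
      rseq_pred EffBinders (fun _ _ => Iff.rfl) _ _
        (effBinders_rr R h.1) (effBinders_rr T h.2)
  | .par R T, h =>
      rpar_pred EffBinders (fun _ _ => Iff.rfl) _ _
        (effBinders_rr R h.1) (effBinders_rr T h.2)
  | .all a R, h => ⟨by rw [fv_rr]; exact h.1, effBinders_rr R h.2⟩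

theorem rightRec_rten : ∀ R T : Str, RightRec R → RightRec T →
    RightRec (rten R T)
  | .ten A B, T, hR, hT => by
      show RightRec (rten A (rten B T))
      rw [rten_eq A _ hR.1]
      exact ⟨hR.1, hR.2.1, rightRec_rten B T hR.2.2 hT⟩
  | .one, T, hR, hT => by
      rw [rten_eq _ _ (fun A B h => by cases h)]
      exact And.intro (fun A B h => by cases h) (And.intro hR hT)
  | .pos _, T, hR, hT => by
      rw [rten_eq _ _ (fun A B h => by cases h)]
      exact And.intro (fun A B h => by cases h) (And.intro hR hT)
  | .not _, T, hR, hT => by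
      rw [rten_eq _ _ (fun A B h => by cases h)]
      exact And.intro (fun A B h => by cases h) (And.intro hR hT)
  | .seq _ _, T, hR, hT => by
      rw [rten_eq _ _ (fun A B h => by cases h)]
      exact And.intro (fun A B h => by cases h) (And.intro hR hT)
  | .par _ _, T, hR, hT => by
      rw [rten_eq _ _ (fun A B h => by cases h)]
      exact And.intro (fun A B h => by cases h) (And.intro hR hT)
  | .all _ _, T, hR, hT => by
      rw [rten_eq _ _ (fun A B h => by cases h)]
      exact And.intro (fun A B h => by cases h) (And.intro hR hT)

theorem rightRec_rseq : ∀ R T : Str, RightRec R → RightRec T →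
    RightRec (rseq R T)
  | .seq A B, T, hR, hT => by
      show RightRec (rseq A (rseq B T))
      rw [rseq_eq A _ hR.1]
      exact ⟨hR.1, hR.2.1, rightRec_rseq B T hR.2.2 hT⟩
  | .one, T, hR, hT => by
      rw [rseq_eq _ _ (fun A B h => by cases h)]
      exact And.intro (fun A B h => by cases h) (And.intro hR hT)
  | .pos _, T, hR, hT => by
      rw [rseq_eq _ _ (fun A B h => by cases h)]
      exact And.intro (fun A B h => by cases h) (And.intro hR hT)
  | .not _, T, hR, hT => by
      rw [rseq_eq _ _ (fun A B h => by cases h)]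
      exact And.intro (fun A B h => by cases h) (And.intro hR hT)
  | .ten _ _, T, hR, hT => by
      rw [rseq_eq _ _ (fun A B h => by cases h)]
      exact And.intro (fun A B h => by cases h) (And.intro hR hT)
  | .par _ _, T, hR, hT => by
      rw [rseq_eq _ _ (fun A B h => by cases h)]
      exact And.intro (fun A B h => by cases h) (And.intro hR hT)
  | .all _ _, T, hR, hT => by
      rw [rseq_eq _ _ (fun A B h => by cases h)]
      exact And.intro (fun A B h => by cases h) (And.intro hR hT)

theorem rightRec_rpar : ∀ R T : Str, RightRec R → RightRec T →
    RightRec (rpar R T)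
  | .par A B, T, hR, hT => by
      show RightRec (rpar A (rpar B T))
      rw [rpar_eq A _ hR.1]
      exact ⟨hR.1, hR.2.1, rightRec_rpar B T hR.2.2 hT⟩
  | .one, T, hR, hT => by
      rw [rpar_eq _ _ (fun A B h => by cases h)]
      exact And.intro (fun A B h => by cases h) (And.intro hR hT)
  | .pos _, T, hR, hT => by
      rw [rpar_eq _ _ (fun A B h => by cases h)]
      exact And.intro (fun A B h => by cases h) (And.intro hR hT)
  | .not _, T, hR, hT => by
      rw [rpar_eq _ _ (fun A B h => by cases h)]
      exact And.intro (fun A B h => by cases h) (And.intro hR hT)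
  | .ten _ _, T, hR, hT => by
      rw [rpar_eq _ _ (fun A B h => by cases h)]
      exact And.intro (fun A B h => by cases h) (And.intro hR hT)
  | .seq _ _, T, hR, hT => by
      rw [rpar_eq _ _ (fun A B h => by cases h)]
      exact And.intro (fun A B h => by cases h) (And.intro hR hT)
  | .all _ _, T, hR, hT => by
      rw [rpar_eq _ _ (fun A B h => by cases h)]
      exact And.intro (fun A B h => by cases h) (And.intro hR hT)

theorem rightRec_rr : ∀ R : Str, RightRec (rr R)
  | .one => trivial
  | .pos _ => trivial
  | .not R => rightRec_rr R
  | .ten R T => rightRec_rten _ _ (rightRec_rr R) (rightRec_rr T)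
  | .seq R T => rightRec_rseq _ _ (rightRec_rr R) (rightRec_rr T)
  | .par R T => rightRec_rpar _ _ (rightRec_rr R) (rightRec_rr T)
  | .all a R => rightRec_rr R

theorem atoms_ne_nil : ∀ R : Str, NoUnit R → R.atoms ≠ []
  | .one, h => h.elim
  | .pos a, _ => by simp [Str.atoms]
  | .not R, h => by simp [Str.atoms]; exact atoms_ne_nil R h
  | .ten R T, h => by
      simp only [Str.atoms]
      intro hc
      exact atoms_ne_nil R h.1 (List.append_eq_nil_iff.mp hc).1
  | .seq R T, h => by
      simp only [Str.atoms]
      intro hc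
      exact atoms_ne_nil R h.1 (List.append_eq_nil_iff.mp hc).1
  | .par R T, h => by
      simp only [Str.atoms]
      intro hc
      exact atoms_ne_nil R h.1 (List.append_eq_nil_iff.mp hc).1
  | .all a R, h => atoms_ne_nil R h

/-- every structure is ≈-equivalent to a canonical one, which
    is either the unit or different from the unit. -/
theorem normalization_to_canonical (R : Str) :
    ∃ C : Str, Canonical C ∧ Cong R C ∧ (C = Str.one ∨ C ≠ Str.one) := by
  set E := uel (nnf R) with hE
  have hcongE : Cong R E := (cong_nnf_negf R).1.trans (cong_uel (nnf R))
  by_cases h1 : E = Str.one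
  · exact ⟨Str.one, Or.inl rfl, h1 ▸ hcongE, Or.inl rfl⟩
  · have hNA : NegAtomic E := negAtomic_uel _ (negAtomic_nnf_negf R).1
    have hNU : NoUnit E := (noUnit_uel _ (negAtomic_nnf_negf R).1).resolve_left h1
    refine ⟨rr E, Or.inr ⟨negAtomic_rr E hNA, noUnit_rr E hNU, ?_,
      rightRec_rr E, effBinders_rr E (effBinders_uel (nnf R))⟩,
      hcongE.trans (cong_rr E), eq_or_ne _ _⟩
    show (rr E).atoms ≠ []
    rw [atoms_rr]
    exact atoms_ne_nil E hNU

end BVQ
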